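/- Let P be a weakly m-homogeneous closed subset of 2^ω, with c_k the common number of extensions in T_P of length m(k+1) of any node of length mk. Then for any closed Q ⊆ P, any k, i ∈ ω and s, t < m: #(T_Q↾(m(k+i)+t)) / #(T_Q↾(mk+s)) ≤ 2^{2m} · #(T_P↾(m(k+i)+t)) / #(T_P↾(mk+s)). In particular every weakly m-homogeneous class satisfies condition (†) of VL-homogeneity with constant 2^{2m}. -/

import Mathlib

open MeasureTheory Filter

noncomputable section

/-- The cylinder (basic clopen set) determined by a finite binary string. -/
def cyl (σ : List Bool) : Set (ℕ → Bool) :=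
  {X | ∀ i, i < σ.length → X i = σ.getD i false}

/-- σ is an extendible node of P, i.e. σ ∈ T_P. -/
def extn (P : Set (ℕ → Bool)) (σ : List Bool) : Prop :=
  (cyl σ ∩ P).Nonempty

/-- The level-n strings of the tree of extendible nodes, T_P ↾ n. -/
def level (P : Set (ℕ → Bool)) (n : ℕ) : Set (List Bool) :=
  {σ | σ.length = n ∧ extn P σ}

/-- #(T_P ↾ n). -/
def levelCard (P : Set (ℕ → Bool)) (n : ℕ) : ℕ :=
  (level P n).ncard

/-- The clopen set [T_P ↾ n] generated by the level-n extendible nodes. -/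
def levelUnion (P : Set (ℕ → Bool)) (n : ℕ) : Set (ℕ → Bool) :=
  ⋃ σ ∈ level P n, cyl σ

/-- The prefix of σ of length m+1 with its last bit flipped, i.e. (σ↾(m+1))^↷. -/
def flipAt (σ : List Bool) (m : ℕ) : List Bool :=
  σ.take m ++ [!σ.getD m false]

/-- θ_P(σ): the number of initial segments of σ whose last-bit-flipped sibling is in T_P. -/
def theta (P : Set (ℕ → Bool)) (σ : List Bool) : ℕ :=
  {m | m < σ.length ∧ extn P (flipAt σ m)}.ncard

/-- The number of extensions of σ in T_P ↾ n. -/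
def extCard (P : Set (ℕ → Bool)) (σ : List Bool) (n : ℕ) : ℕ :=
  {τ | τ.length = n ∧ extn P τ ∧ σ <+: τ}.ncard

/-- X ↾ n as a finite string. -/
def prefixList (X : ℕ → Bool) (n : ℕ) : List Bool :=
  List.ofFn (fun i : Fin n => X i)

/-- Interleaving X ⊕ Y of two infinite sequences. -/
def seqInterleave (X Y : ℕ → Bool) : ℕ → Bool :=
  fun n => if n % 2 = 0 then X (n / 2) else Y (n / 2)

/-- Interleaving σ ⊕ τ of two finite strings (of equal length). -/
def interleave : List Bool → List Bool → List Bool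
  | a :: σ, b :: τ => a :: b :: interleave σ τ
  | _, _ => []

/-- The product P₀ ⊗ P₁ = {X ⊕ Y : X ∈ P₀, Y ∈ P₁}. -/
def prodClass (P₀ P₁ : Set (ℕ → Bool)) : Set (ℕ → Bool) :=
  {Z | ∃ X ∈ P₀, ∃ Y ∈ P₁, Z = seqInterleave X Y}


lemma finite_len (n : ℕ) : {σ : List Bool | σ.length = n}.Finite := by
  apply Set.Finite.subset (Set.finite_range (fun f : Fin n → Bool => List.ofFn f))
  intro σ hσ
  have hσ' : σ.length = n := hσ
  subst hσ'
  exact ⟨fun i => σ.get i, List.ofFn_get σ⟩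

lemma level_finite (Q : Set (ℕ → Bool)) (n : ℕ) : (level Q n).Finite :=
  (finite_len n).subset (fun σ h => h.1)

lemma extSet_finite (P : Set (ℕ → Bool)) (σ : List Bool) (n : ℕ) :
    {τ : List Bool | τ.length = n ∧ extn P τ ∧ σ <+: τ}.Finite :=
  (finite_len n).subset (fun τ h => h.1)

lemma cyl_anti {σ τ : List Bool} (h : σ <+: τ) : cyl τ ⊆ cyl σ := by
  intro X hX i hi
  have hlen : i < τ.length := lt_of_lt_of_le hi h.length_le
  have := hX i hlen
  rw [this]
  obtain ⟨ρ, rfl⟩ := h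
  rw [List.getD_eq_getElem _ _ hi, List.getD_eq_getElem _ _ hlen]
  exact List.getElem_append_left hi

lemma extn_mono {Q P : Set (ℕ → Bool)} (h : Q ⊆ P) {σ : List Bool} (hσ : extn Q σ) :
    extn P σ := hσ.mono (Set.inter_subset_inter_right _ h)

lemma extn_prefix {Q : Set (ℕ → Bool)} {σ τ : List Bool} (h : σ <+: τ) (hτ : extn Q τ) :
    extn Q σ := hτ.mono (Set.inter_subset_inter_left _ (cyl_anti h))

lemma mem_cyl_prefixList (X : ℕ → Bool) (n : ℕ) : X ∈ cyl (prefixList X n) := by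
  intro i hi
  have hi' : i < n := by simpa [prefixList] using hi
  rw [List.getD_eq_getElem _ _ hi]
  simp [prefixList]

lemma prefixList_eq {X : ℕ → Bool} {σ : List Bool} (hX : X ∈ cyl σ) :
    prefixList X σ.length = σ := by
  apply List.ext_getElem (by simp [prefixList])
  intro i h1 h2
  simp [prefixList]
  rw [hX i h2, List.getD_eq_getElem _ _ h2]

lemma take_prefixList (X : ℕ → Bool) {n n' : ℕ} (h : n ≤ n') :
    (prefixList X n').take n = prefixList X n := by
  apply List.ext_getElem (by simp [prefixList, h])
  intro i h1 h2
  simp [prefixList]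

lemma prefixList_mem_level {Q : Set (ℕ → Bool)} {X : ℕ → Bool} (hX : X ∈ Q) (n : ℕ) :
    prefixList X n ∈ level Q n :=
  ⟨by simp [prefixList], ⟨X, mem_cyl_prefixList X n, hX⟩⟩

lemma take_mem_level {Q : Set (ℕ → Bool)} {τ : List Bool} {n n' : ℕ} (h : n ≤ n')
    (hτ : τ ∈ level Q n') : τ.take n ∈ level Q n :=
  ⟨by simp [hτ.1, h], extn_prefix (List.take_prefix _ _) hτ.2⟩

lemma levelCard_mono (Q : Set (ℕ → Bool)) {n n' : ℕ} (h : n ≤ n') :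
    levelCard Q n ≤ levelCard Q n' := by
  have himg : level Q n ⊆ (fun τ : List Bool => τ.take n) '' level Q n' := by
    rintro σ ⟨hlen, X, hXc, hXQ⟩
    refine ⟨prefixList X n', prefixList_mem_level hXQ n', ?_⟩
    show (prefixList X n').take n = σ
    rw [take_prefixList X h, ← hlen, prefixList_eq hXc]
  calc levelCard Q n ≤ ((fun τ : List Bool => τ.take n) '' level Q n').ncard :=
        Set.ncard_le_ncard himg ((level_finite Q n').image _)
    _ ≤ levelCard Q n' := Set.ncard_image_le (level_finite Q n')

open Finset in
lemma levelCard_succ_le (Q : Set (ℕ → Bool)) (n : ℕ) :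
    levelCard Q (n + 1) ≤ 2 * levelCard Q n := by
  classical
  have hs := level_finite Q (n + 1)
  have ht := level_finite Q n
  have key : hs.toFinset.card ≤ 2 * ht.toFinset.card := by
    apply Finset.card_le_mul_card_image_of_maps_to
      (f := fun τ : List Bool => τ.take n)
    · intro a ha
      rw [Set.Finite.mem_toFinset] at ha ⊢
      exact take_mem_level (Nat.le_succ n) ha
    · intro b hb
      have hsub : {a ∈ hs.toFinset | a.take n = b} ⊆ {b ++ [false], b ++ [true]} := by
        intro a ha
        rw [Finset.mem_filter, Set.Finite.mem_toFinset] at ha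
        obtain ⟨⟨hlen, _⟩, htake⟩ := ha
        have hn : n < a.length := by omega
        have : a = a.take n ++ a.drop n := (List.take_append_drop n a).symm
        have hdrop : a.drop n = [a[n]] := by
          rw [List.drop_eq_getElem_cons hn]
          have : a.drop (n+1) = [] := List.drop_eq_nil_of_le (by omega)
          rw [this]
        rw [htake, hdrop] at this
        rcases Bool.eq_false_or_eq_true (a[n]) with h | h <;>
          · rw [h] at this; simp [this]
      calc {a ∈ hs.toFinset | a.take n = b}.card ≤ _ := Finset.card_le_card hsub
        _ ≤ 2 := by
          apply le_trans (Finset.card_insert_le _ _); simp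
  unfold levelCard
  rwa [Set.ncard_eq_toFinset_card _ hs, Set.ncard_eq_toFinset_card _ ht]

lemma levelCard_le_pow (Q : Set (ℕ → Bool)) (n j : ℕ) :
    levelCard Q (n + j) ≤ 2 ^ j * levelCard Q n := by
  induction j with
  | zero => simp
  | succ j ih =>
    calc levelCard Q (n + (j + 1)) = levelCard Q ((n + j) + 1) := by ring_nf
      _ ≤ 2 * levelCard Q (n + j) := levelCard_succ_le Q _
      _ ≤ 2 * (2 ^ j * levelCard Q n) := Nat.mul_le_mul_left 2 ih
      _ = 2 ^ (j + 1) * levelCard Q n := by ring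

open Finset in
lemma step_le (P Q : Set (ℕ → Bool)) (hQP : Q ⊆ P) (m : ℕ) (c : ℕ → ℕ)
    (hhom : ∀ (k : ℕ) (σ : List Bool), σ ∈ level P (m * k) →
      extCard P σ (m * (k + 1)) = c k) (k : ℕ) :
    levelCard Q (m * (k + 1)) ≤ c k * levelCard Q (m * k) := by
  classical
  have hmk : m * k ≤ m * (k + 1) := Nat.mul_le_mul_left m (by omega)
  have hs := level_finite Q (m * (k + 1))
  have ht := level_finite Q (m * k)
  have key : hs.toFinset.card ≤ c k * ht.toFinset.card := by
    apply Finset.card_le_mul_card_image_of_maps_to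
      (f := fun τ : List Bool => τ.take (m * k))
    · intro a ha
      rw [Set.Finite.mem_toFinset] at ha ⊢
      exact take_mem_level hmk ha
    · intro σ hσ
      rw [Set.Finite.mem_toFinset] at hσ
      have hσP : σ ∈ level P (m * k) := ⟨hσ.1, extn_mono hQP hσ.2⟩
      have hsub : (({a ∈ hs.toFinset | a.take (m * k) = σ} : Finset _) : Set (List Bool)) ⊆
          {τ : List Bool | τ.length = m * (k + 1) ∧ extn P τ ∧ σ <+: τ} := by
        intro a ha
        rw [Finset.coe_filter, Set.mem_setOf_eq, Set.Finite.mem_toFinset] at ha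
        obtain ⟨⟨hlen, hext⟩, htake⟩ := ha
        refine ⟨hlen, extn_mono hQP hext, ?_⟩
        rw [List.prefix_iff_eq_take, hσ.1, htake]
      calc {a ∈ hs.toFinset | a.take (m * k) = σ}.card
          = (({a ∈ hs.toFinset | a.take (m * k) = σ} : Finset _) : Set (List Bool)).ncard :=
            (Set.ncard_coe_finset _).symm
        _ ≤ _ := Set.ncard_le_ncard hsub (extSet_finite P σ _)
        _ = c k := hhom k σ hσP
  unfold levelCard
  rwa [Set.ncard_eq_toFinset_card _ hs, Set.ncard_eq_toFinset_card _ ht]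

open Finset in
lemma step_ge (P : Set (ℕ → Bool)) (m : ℕ) (c : ℕ → ℕ)
    (hhom : ∀ (k : ℕ) (σ : List Bool), σ ∈ level P (m * k) →
      extCard P σ (m * (k + 1)) = c k) (k : ℕ) :
    c k * levelCard P (m * k) ≤ levelCard P (m * (k + 1)) := by
  classical
  have hmk : m * k ≤ m * (k + 1) := Nat.mul_le_mul_left m (by omega)
  have hs := level_finite P (m * (k + 1))
  have ht := level_finite P (m * k)
  have key : c k * ht.toFinset.card ≤ hs.toFinset.card := by
    apply Finset.mul_card_image_le_card_of_maps_to
      (f := fun τ : List Bool => τ.take (m * k)) (t := ht.toFinset)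
    · intro a ha
      rw [Set.Finite.mem_toFinset] at ha ⊢
      exact take_mem_level hmk ha
    · intro σ hσ
      rw [Set.Finite.mem_toFinset] at hσ
      have hsub : {τ : List Bool | τ.length = m * (k + 1) ∧ extn P τ ∧ σ <+: τ} ⊆
          (({a ∈ hs.toFinset | a.take (m * k) = σ} : Finset _) : Set (List Bool)) := by
        rintro τ ⟨hlen, hext, hpre⟩
        rw [Finset.coe_filter, Set.mem_setOf_eq, Set.Finite.mem_toFinset]
        refine ⟨⟨hlen, hext⟩, ?_⟩
        have := List.prefix_iff_eq_take.mp hpre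
        rw [← hσ.1, ← this]
      calc c k = extCard P σ (m * (k + 1)) := (hhom k σ hσ).symm
        _ ≤ (({a ∈ hs.toFinset | a.take (m * k) = σ} : Finset _) : Set (List Bool)).ncard :=
            Set.ncard_le_ncard hsub (Finset.finite_toSet _)
        _ = _ := Set.ncard_coe_finset _
  unfold levelCard
  rwa [Set.ncard_eq_toFinset_card _ hs, Set.ncard_eq_toFinset_card _ ht]

lemma prod_le (P Q : Set (ℕ → Bool)) (hQP : Q ⊆ P) (m : ℕ) (c : ℕ → ℕ)
    (hhom : ∀ (k : ℕ) (σ : List Bool), σ ∈ level P (m * k) →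
      extCard P σ (m * (k + 1)) = c k) (k i : ℕ) :
    levelCard Q (m * (k + i)) ≤ (∏ j ∈ Finset.range i, c (k + j)) * levelCard Q (m * k) := by
  induction i with
  | zero => simp
  | succ i ih =>
    have hstep := step_le P Q hQP m c hhom (k + i)
    calc levelCard Q (m * (k + (i + 1))) = levelCard Q (m * ((k + i) + 1)) := by ring_nf
      _ ≤ c (k + i) * levelCard Q (m * (k + i)) := hstep
      _ ≤ c (k + i) * ((∏ j ∈ Finset.range i, c (k + j)) * levelCard Q (m * k)) :=
          Nat.mul_le_mul_left _ ih
      _ = (∏ j ∈ Finset.range (i + 1), c (k + j)) * levelCard Q (m * k) := by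
          rw [Finset.prod_range_succ]; ring

lemma prod_ge (P : Set (ℕ → Bool)) (m : ℕ) (c : ℕ → ℕ)
    (hhom : ∀ (k : ℕ) (σ : List Bool), σ ∈ level P (m * k) →
      extCard P σ (m * (k + 1)) = c k) (k i : ℕ) :
    (∏ j ∈ Finset.range i, c (k + j)) * levelCard P (m * k) ≤ levelCard P (m * (k + i)) := by
  induction i with
  | zero => simp
  | succ i ih =>
    have hstep := step_ge P m c hhom (k + i)
    calc (∏ j ∈ Finset.range (i + 1), c (k + j)) * levelCard P (m * k)
        = c (k + i) * ((∏ j ∈ Finset.range i, c (k + j)) * levelCard P (m * k)) := by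
          rw [Finset.prod_range_succ]; ring
      _ ≤ c (k + i) * levelCard P (m * (k + i)) := Nat.mul_le_mul_left _ ih
      _ ≤ levelCard P (m * ((k + i) + 1)) := hstep
      _ = levelCard P (m * (k + (i + 1))) := by ring_nf

theorem stmt15 (P : Set (ℕ → Bool)) (hPne : P.Nonempty) (hPc : IsClosed P)
    (m : ℕ) (c : ℕ → ℕ)
    (hhom : ∀ (k : ℕ) (σ : List Bool), σ ∈ level P (m * k) →
      extCard P σ (m * (k + 1)) = c k) :
    ∀ Q : Set (ℕ → Bool), IsClosed Q → Q ⊆ P → ∀ k i s t : ℕ, s < m → t < m →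
      levelCard Q (m * (k + i) + t) * levelCard P (m * k + s) ≤
        2 ^ (2 * m) * (levelCard P (m * (k + i) + t) * levelCard Q (m * k + s)) := by
  intro Q _hQc hQP k i s t hs ht
  set M := m * (k + i) with hM
  set K := m * k with hK
  set C := ∏ j ∈ Finset.range i, c (k + j) with hC
  have h1 : levelCard Q (M + t) ≤ 2 ^ t * (C * levelCard Q (K + s)) := by
    calc levelCard Q (M + t) ≤ 2 ^ t * levelCard Q M := levelCard_le_pow Q M t
      _ ≤ 2 ^ t * (C * levelCard Q K) :=
          Nat.mul_le_mul_left _ (prod_le P Q hQP m c hhom k i)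
      _ ≤ 2 ^ t * (C * levelCard Q (K + s)) :=
          Nat.mul_le_mul_left _ (Nat.mul_le_mul_left _ (levelCard_mono Q (Nat.le_add_right K s)))
  have h2 : C * levelCard P (K + s) ≤ 2 ^ s * levelCard P (M + t) := by
    calc C * levelCard P (K + s) ≤ C * (2 ^ s * levelCard P K) :=
          Nat.mul_le_mul_left _ (levelCard_le_pow P K s)
      _ = 2 ^ s * (C * levelCard P K) := by ring
      _ ≤ 2 ^ s * levelCard P M := Nat.mul_le_mul_left _ (prod_ge P m c hhom k i)
      _ ≤ 2 ^ s * levelCard P (M + t) :=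
          Nat.mul_le_mul_left _ (levelCard_mono P (Nat.le_add_right M t))
  calc levelCard Q (M + t) * levelCard P (K + s)
      ≤ (2 ^ t * (C * levelCard Q (K + s))) * levelCard P (K + s) :=
        Nat.mul_le_mul_right _ h1
    _ = (2 ^ t * levelCard Q (K + s)) * (C * levelCard P (K + s)) := by ring
    _ ≤ (2 ^ t * levelCard Q (K + s)) * (2 ^ s * levelCard P (M + t)) :=
        Nat.mul_le_mul_left _ h2
    _ = 2 ^ (t + s) * (levelCard P (M + t) * levelCard Q (K + s)) := by
        rw [pow_add]; ring
    _ ≤ 2 ^ (2 * m) * (levelCard P (M + t) * levelCard Q (K + s)) :=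
        Nat.mul_le_mul_right _ (Nat.pow_le_pow_right (by norm_num) (by omega))
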